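/- For every integer n > 1, the sum over all weakly decreasing tuples (λ₁, λ₂, ..., λₙ) of nonnegative integers with λ₁ + λ₂ + ... + λₙ = n and λ₁ even of the product C(λ₁,λ₂)·C(λ₂,λ₃)···C(λₙ,0) multiplied by the rational number n/λ₁ equals 2^(n-1) − 1. -/

import Mathlib

open Finset

/-- Weakly decreasing tuples `(λ₁,…,λₙ)` of nonnegative integers with `λ₁+⋯+λₙ = n`. -/
def partitionTuples (n : ℕ) : Finset (Fin n → ℕ) :=
  (Finset.Nat.antidiagonalTuple n n).filter fun t => ∀ i j : Fin n, i ≤ j → t j ≤ t i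

/-- The product `C(λ₁,λ₂)·C(λ₂,λ₃)⋯C(λₙ,0)` with the convention `λ_{n+1} = 0`. -/
def binomProd (n : ℕ) (t : Fin n → ℕ) : ℕ :=
  ∏ i : Fin n, Nat.choose (t i) (if h : (i : ℕ) + 1 < n then t ⟨(i : ℕ) + 1, h⟩ else 0)

def T (m n : ℕ) : Finset (Fin m → ℕ) :=
  (Finset.Nat.antidiagonalTuple m n).filter fun t => ∀ i j : Fin m, i ≤ j → t j ≤ t i


lemma mem_T {m n : ℕ} {t : Fin m → ℕ} :
    t ∈ T m n ↔ (∑ i, t i = n) ∧ ∀ i j : Fin m, i ≤ j → t j ≤ t i := by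
  simp [T, Finset.Nat.mem_antidiagonalTuple]

lemma bp_cons (m k : ℕ) (s : Fin (m+1) → ℕ) :
    binomProd (m+2) (Fin.cons k s) = Nat.choose k (s 0) * binomProd (m+1) s := by
  rw [binomProd, Fin.prod_univ_succ]
  refine congrArg₂ (· * ·) ?_ ?_
  · have h1 : ((0 : Fin (m+2)) : ℕ) + 1 < m + 2 := by simp
    rw [dif_pos h1]
    rfl
  · rw [binomProd]
    apply Finset.prod_congr rfl
    intro j _
    rw [Fin.cons_succ]
    congr 1
    by_cases h : (j:ℕ) + 1 < m + 1
    · have h2 : ((j.succ : Fin (m+2)) : ℕ) + 1 < m + 2 := by simp; omega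
      rw [dif_pos h2, dif_pos h]
      have : (⟨((j.succ : Fin (m+2)) : ℕ) + 1, h2⟩ : Fin (m+2)) = Fin.succ ⟨(j:ℕ)+1, h⟩ := by
        apply Fin.ext; simp
      rw [this, Fin.cons_succ]
    · have h2 : ¬ (((j.succ : Fin (m+2)) : ℕ) + 1 < m + 2) := by simp; omega
      rw [dif_neg h2, dif_neg h]

lemma head_le {m n : ℕ} {t : Fin (m+1) → ℕ} (ht : t ∈ T (m+1) n) : t 0 ≤ n := by
  rw [mem_T] at ht
  calc t 0 ≤ ∑ i, t i := Finset.single_le_sum (fun i _ => Nat.zero_le _) (mem_univ 0)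
    _ = n := ht.1

lemma empty_of_gt {m n k : ℕ} (h : n < k) :
    (T (m+1) n).filter (fun t => t 0 = k) = ∅ := by
  rw [Finset.filter_eq_empty_iff]
  intro t ht hk
  exact absurd (hk ▸ head_le ht) (by omega)

lemma empty_of_head_zero {m n : ℕ} (h : 1 ≤ n) :
    (T (m+1) n).filter (fun t => t 0 = 0) = ∅ := by
  rw [Finset.filter_eq_empty_iff]
  intro t ht hk
  rw [mem_T] at ht
  have : ∀ i, t i = 0 := fun i => Nat.le_zero.mp (hk ▸ ht.2 0 i (Fin.zero_le i))
  have : ∑ i, t i = 0 := Finset.sum_eq_zero fun i _ => this i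
  omega

lemma singleton_of_eq {m n : ℕ} (hn : 1 ≤ n) :
    (T (m+1) n).filter (fun t => t 0 = n) = {fun i => if i = 0 then n else 0} := by
  ext t
  simp only [Finset.mem_filter, Finset.mem_singleton, mem_T]
  constructor
  · rintro ⟨⟨hsum, hdec⟩, h0⟩
    have htail : ∀ i : Fin (m+1), i ≠ 0 → t i = 0 := by
      intro i hi
      by_contra hne
      have h1 : 1 ≤ t i := Nat.pos_of_ne_zero hne
      have := Finset.add_sum_erase _ t (mem_univ (0 : Fin (m+1)))
      have h2 : t i ≤ ∑ j ∈ univ.erase 0, t j :=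
        Finset.single_le_sum (fun j _ => Nat.zero_le _) (by simp [hi])
      omega
    funext i
    by_cases hi : i = 0
    · simp [hi, h0]
    · simp [hi, htail i hi]
  · rintro rfl
    refine ⟨⟨?_, ?_⟩, by simp⟩
    · simp
    · intro i j hij
      by_cases hi : i = 0 <;> by_cases hj : j = 0
      · simp [hi, hj]
      · simp [hi, hj]
      · rw [hj] at hij
        exact absurd (Fin.le_zero_iff.mp hij) hi
      · simp [hi, hj]

lemma bp_singleton {m n : ℕ} :
    binomProd (m+1) (fun i => if i = 0 then n else 0) = 1 := by
  rw [binomProd]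
  apply Finset.prod_eq_one
  intro i _
  have : (if h : (i : ℕ) + 1 < m + 1 then
      (fun j : Fin (m+1) => if j = 0 then n else 0) ⟨(i : ℕ) + 1, h⟩ else 0) = 0 := by
    split
    · beta_reduce
      rw [if_neg]
      intro hc
      rw [Fin.ext_iff, Fin.val_zero] at hc
      exact Nat.succ_ne_zero _ hc
    · rfl
  rw [this, Nat.choose_zero_right]

lemma sum_decomp {m n k : ℕ} (hkn : k ≤ n) :
    ∑ t ∈ (T (m+2) n).filter (fun t => t 0 = k), binomProd (m+2) t
      = ∑ s ∈ (T (m+1) (n-k)).filter (fun s => s 0 ≤ k),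
          Nat.choose k (s 0) * binomProd (m+1) s := by
  apply Finset.sum_nbij' (i := fun t => Fin.tail t) (j := fun s => Fin.cons k s)
  · intro t ht
    rw [Finset.mem_filter] at ht ⊢
    obtain ⟨ht, h0⟩ := ht
    rw [mem_T] at ht ⊢
    obtain ⟨hsum, hdec⟩ := ht
    rw [Fin.sum_univ_succ] at hsum
    refine ⟨⟨?_, ?_⟩, ?_⟩
    · show ∑ i : Fin (m+1), t i.succ = n - k
      omega
    · intro i j hij
      exact hdec i.succ j.succ (Fin.succ_le_succ_iff.mpr hij)
    · show t (Fin.succ 0) ≤ k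
      rw [← h0]
      exact hdec 0 (Fin.succ 0) (Fin.zero_le _)
  · intro s hs
    rw [Finset.mem_filter] at hs ⊢
    obtain ⟨hs, h0⟩ := hs
    rw [mem_T] at hs ⊢
    obtain ⟨hsum, hdec⟩ := hs
    refine ⟨⟨?_, ?_⟩, ?_⟩
    · rw [Fin.sum_univ_succ, Fin.cons_zero]
      simp only [Fin.cons_succ]
      omega
    · intro i j hij
      induction i using Fin.cases with
      | zero =>
        induction j using Fin.cases with
        | zero => exact le_refl _
        | succ j' =>
          rw [Fin.cons_zero, Fin.cons_succ]
          exact le_trans (hdec 0 j' (Fin.zero_le _)) h0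
      | succ i' =>
        induction j using Fin.cases with
        | zero =>
          exact absurd (Fin.le_zero_iff.mp hij) (Fin.succ_ne_zero i')
        | succ j' =>
          rw [Fin.cons_succ, Fin.cons_succ]
          exact hdec i' j' (Fin.succ_le_succ_iff.mp hij)
    · exact Fin.cons_zero _ _
  · intro t ht
    rw [Finset.mem_filter] at ht
    rw [← ht.2]
    exact Fin.cons_self_tail t
  · intro s _
    exact Fin.tail_cons _ _
  · intro t ht
    rw [Finset.mem_filter] at ht
    conv_lhs => rw [← Fin.cons_self_tail t, ht.2]
    exact bp_cons _ _ _

lemma vdm {n k : ℕ} (hk : 1 ≤ k) (hkn : k < n) :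
    ∑ j ∈ Finset.range (k+1),
        Nat.choose k j * (if j = 0 then 0 else Nat.choose (n-k-1) (j-1))
      = Nat.choose (n-1) (k-1) := by
  rw [Finset.sum_range_succ']
  simp only [Nat.succ_ne_zero, if_false, if_true, Nat.add_sub_cancel, mul_zero, add_zero,
    reduceIte]
  have h1 : n - 1 = (n-k-1) + k := by omega
  rw [h1, Nat.add_choose_eq,
    Finset.Nat.sum_antidiagonal_eq_sum_range_succ
      (fun i j => Nat.choose (n-k-1) i * Nat.choose k j)]
  have h2 : (k - 1).succ = k := by omega
  rw [h2]
  apply Finset.sum_congr rfl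
  intro i hi
  rw [Finset.mem_range] at hi
  rw [mul_comm]
  congr 1
  have h3 : k - 1 - i = k - (i+1) := by omega
  rw [h3, Nat.choose_symm (by omega)]

lemma key : ∀ n m k : ℕ, 1 ≤ n → n ≤ m + 1 → 1 ≤ k →
    ∑ t ∈ (T (m+1) n).filter (fun t => t 0 = k), binomProd (m+1) t
      = Nat.choose (n-1) (k-1) := by
  intro n
  induction n using Nat.strong_induction_on with
  | _ n ih =>
  intro m k hn hnm hk
  rcases lt_trichotomy n k with h | h | h
  · rw [empty_of_gt h, Finset.sum_empty,
      Nat.choose_eq_zero_of_lt (by omega)]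
  · subst h
    rw [singleton_of_eq hn, Finset.sum_singleton, bp_singleton, Nat.choose_self]
  · obtain ⟨m', rfl⟩ : ∃ m', m = m' + 1 := ⟨m - 1, by omega⟩
    rw [sum_decomp (le_of_lt h)]
    have hmaps : ∀ s ∈ (T (m'+1) (n-k)).filter (fun s => s 0 ≤ k),
        s 0 ∈ Finset.range (k+1) := by
      intro s hs
      rw [Finset.mem_range]
      have := (Finset.mem_filter.mp hs).2
      omega
    have hfib := Finset.sum_fiberwise_of_maps_to hmaps
      (fun s => Nat.choose k (s 0) * binomProd (m'+1) s)
    rw [← hfib, ← vdm hk h]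
    clear hfib
    apply Finset.sum_congr rfl
    intro j hj
    rw [Finset.mem_range] at hj
    rw [Finset.filter_filter]
    have hset : (T (m'+1) (n-k)).filter (fun s => s 0 ≤ k ∧ s 0 = j)
        = (T (m'+1) (n-k)).filter (fun s => s 0 = j) := by
      apply Finset.filter_congr
      intro s _
      constructor
      · exact fun h' => h'.2
      · exact fun h' => ⟨by omega, h'⟩
    rw [hset]
    have hstep : ∑ s ∈ (T (m'+1) (n-k)).filter (fun s => s 0 = j),
        Nat.choose k (s 0) * binomProd (m'+1) s
        = Nat.choose k j * ∑ s ∈ (T (m'+1) (n-k)).filter (fun s => s 0 = j),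
            binomProd (m'+1) s := by
      rw [Finset.mul_sum]
      apply Finset.sum_congr rfl
      intro s hs
      rw [(Finset.mem_filter.mp hs).2]
    rw [hstep]
    clear hstep
    congr 1
    by_cases hj0 : j = 0
    · subst hj0
      have h5 : 1 ≤ n - k := by omega
      rw [empty_of_head_zero (m := m') (n := n - k) h5, Finset.sum_empty, if_pos rfl]
    · rw [if_neg hj0]
      have h1 : n - k < n := by omega
      have h2 : 1 ≤ n - k := by omega
      have h3 : n - k ≤ m' + 1 := by omega
      have h4 : 1 ≤ j := by omega
      exact ih (n - k) h1 m' j h2 h3 h4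

lemma even_sum (N : ℕ) :
    ∑ k ∈ Finset.range (N+2), (if Even k then (Nat.choose (N+1) k : ℚ) else 0)
      = 2^(N+1-1) := by
  have halt : ∑ k ∈ Finset.range (N+2), ((-1:ℚ))^k * (Nat.choose (N+1) k : ℚ) = 0 := by
    have h := Int.alternating_sum_range_choose (n := N+1)
    rw [if_neg (Nat.succ_ne_zero N)] at h
    have h2 : ((∑ m ∈ Finset.range (N+2), ((-1:ℤ))^m * (Nat.choose (N+1) m : ℤ) : ℤ) : ℚ) = 0 := by
      rw [h]; norm_num
    push_cast at h2
    exact h2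
  have hfull : ∑ k ∈ Finset.range (N+2), (Nat.choose (N+1) k : ℚ) = 2^(N+1) := by
    have h := Nat.sum_range_choose (N+1)
    have h2 : ((∑ i ∈ Finset.range (N+2), Nat.choose (N+1) i : ℕ) : ℚ) = ((2^(N+1) : ℕ) : ℚ) := by
      rw [h]
    push_cast at h2
    exact h2
  have key2 : ∀ k, (if Even k then (Nat.choose (N+1) k : ℚ) else 0)
      = ((Nat.choose (N+1) k : ℚ) + (-1:ℚ)^k * Nat.choose (N+1) k)/2 := by
    intro k
    rcases Nat.even_or_odd k with he | ho
    · rw [if_pos he, he.neg_one_pow]; ring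
    · rw [if_neg (by exact Nat.not_even_iff_odd.mpr ho), ho.neg_one_pow]; ring
  rw [Finset.sum_congr rfl (fun k _ => key2 k), ← Finset.sum_div, Finset.sum_add_distrib,
    hfull, halt]
  rw [show N+1-1 = N from rfl]
  ring

theorem stmt6 (n : ℕ) (hn : 1 < n) :
    ∑ t ∈ (partitionTuples n).filter (fun t => Even (t ⟨0, Nat.zero_lt_of_lt hn⟩)),
      (binomProd n t : ℚ) * ((n : ℚ) / (t ⟨0, Nat.zero_lt_of_lt hn⟩ : ℚ))
      = 2 ^ (n - 1) - 1 := by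
  obtain ⟨N, rfl⟩ : ∃ N, n = N + 1 := ⟨n - 1, by omega⟩
  have hN : 1 ≤ N := by omega
  have h0 : (⟨0, Nat.zero_lt_of_lt hn⟩ : Fin (N+1)) = 0 := rfl
  have hPT : partitionTuples (N+1) = T (N+1) (N+1) := rfl
  rw [hPT]
  simp only [h0]
  have hmap : ∀ t ∈ (T (N+1) (N+1)).filter (fun t => Even (t 0)),
      t 0 ∈ Finset.range (N+2) := by
    intro t ht
    rw [Finset.mem_range]
    have := head_le (Finset.mem_filter.mp ht).1
    omega
  have hfib := Finset.sum_fiberwise_of_maps_to hmap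
    (fun t => (binomProd (N+1) t : ℚ) * (((N+1 : ℕ) : ℚ) / (t 0 : ℚ)))
  rw [← hfib]
  clear hfib
  have hterm : ∀ k ∈ Finset.range (N+2),
      ∑ t ∈ ((T (N+1) (N+1)).filter (fun t => Even (t 0))).filter (fun t => t 0 = k),
        (binomProd (N+1) t : ℚ) * (((N+1 : ℕ) : ℚ) / (t 0 : ℚ))
      = (if Even k then (Nat.choose (N+1) k : ℚ) else 0) - (if k = 0 then 1 else 0) := by
    intro k hk
    rw [Finset.mem_range] at hk
    rw [Finset.filter_filter]
    by_cases hev : Even k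
    · by_cases hk0 : k = 0
      · subst hk0
        have hemp := empty_of_head_zero (m := N) (n := N+1) (by omega)
        have : (T (N+1) (N+1)).filter (fun t => Even (t 0) ∧ t 0 = 0) = ∅ := by
          rw [Finset.filter_eq_empty_iff]
          intro t ht hc
          exact (Finset.filter_eq_empty_iff.mp hemp) ht hc.2
        rw [this, Finset.sum_empty, if_pos hev, if_pos rfl]
        simp
      · have hset : (T (N+1) (N+1)).filter (fun t => Even (t 0) ∧ t 0 = k)
            = (T (N+1) (N+1)).filter (fun t => t 0 = k) := by
          apply Finset.filter_congr
          intro t _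
          constructor
          · exact fun h' => h'.2
          · exact fun h' => ⟨h' ▸ hev, h'⟩
        rw [hset]
        have hstep : ∑ t ∈ (T (N+1) (N+1)).filter (fun t => t 0 = k),
            (binomProd (N+1) t : ℚ) * (((N+1 : ℕ) : ℚ) / (t 0 : ℚ))
            = (∑ t ∈ (T (N+1) (N+1)).filter (fun t => t 0 = k),
                (binomProd (N+1) t : ℕ) : ℕ) * (((N+1 : ℕ) : ℚ) / (k : ℚ)) := by
          push_cast
          rw [Finset.sum_mul]
          apply Finset.sum_congr rfl
          intro t ht
          rw [(Finset.mem_filter.mp ht).2]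
        rw [hstep, key (N+1) N k (by omega) (by omega) (by omega)]
        rw [if_pos hev, if_neg hk0, sub_zero]
        have hnat : (N+1) * Nat.choose N (k-1) = Nat.choose (N+1) k * k := by
          have h := Nat.add_one_mul_choose_eq N (k-1)
          rw [show k - 1 + 1 = k from by omega] at h
          exact h
        have hkq : (k : ℚ) ≠ 0 := Nat.cast_ne_zero.mpr hk0
        rw [show N + 1 - 1 = N from rfl]
        field_simp
        rw [mul_comm]
        exact_mod_cast congrArg (Nat.cast : ℕ → ℚ) (hnat.trans (mul_comm _ _))
    · have hk0 : k ≠ 0 := by rintro rfl; exact hev Even.zero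
      have : (T (N+1) (N+1)).filter (fun t => Even (t 0) ∧ t 0 = k) = ∅ := by
        rw [Finset.filter_eq_empty_iff]
        intro t _ hc
        exact hev (hc.2 ▸ hc.1)
      rw [this, Finset.sum_empty, if_neg hev, if_neg hk0]
      simp
  rw [Finset.sum_congr rfl hterm, Finset.sum_sub_distrib, even_sum N]
  have hone : ∑ k ∈ Finset.range (N+2), (if k = 0 then (1:ℚ) else 0) = 1 := by simp
  rw [hone]
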